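/- Let H be a finite-dimensional complex Hilbert space and let G be a unitary on H ⊗ H commuting with the swap operator S. Let {λ_μ}_{μ=1..r}, {ρ_μ}_{μ=1..r}, {λ̃_μ}_{μ=1..r}, {ρ̃_μ}_{μ=1..r} be families of operators on H, set P := Σ_μ λ_μ ⊗ ρ_μ, and assume G P G* = Σ_μ λ̃_μ ⊗ ρ̃_μ and G* (ρ_μ ⊗ λ_ν) G = ρ̃_μ ⊗ λ̃_ν for all μ, ν ∈ {1,…,r}. Then (i) λ_μ ⊗ ρ_ν = G (λ̃_μ ⊗ ρ̃_ν) G* for all μ, ν, and (ii) G² P (G*)² = P. -/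

import Mathlib

open Kronecker Matrix

/-- The swap operator on `H ⊗ H`, determined by `S(x ⊗ y) = y ⊗ x`. -/
def swapM (n : Type*) [DecidableEq n] : Matrix (n × n) (n × n) ℂ :=
  fun p q => if p.1 = q.2 ∧ p.2 = q.1 then 1 else 0

lemma swap_mul {n : Type*} [Fintype n] [DecidableEq n] (M : Matrix (n × n) (n × n) ℂ) :
    swapM n * M = Matrix.of (fun p q => M (p.2, p.1) q) := by
  ext p q
  rw [Matrix.mul_apply]
  rw [Finset.sum_eq_single (p.2, p.1)]
  · simp [swapM]
  · intro k _ hk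
    have : ¬ (p.1 = k.2 ∧ p.2 = k.1) := by
      rintro ⟨h1, h2⟩; exact hk (Prod.ext h2.symm h1.symm)
    simp [swapM, this]
  · simp

lemma mul_swap {n : Type*} [Fintype n] [DecidableEq n] (M : Matrix (n × n) (n × n) ℂ) :
    M * swapM n = Matrix.of (fun p q => M p (q.2, q.1)) := by
  ext p q
  rw [Matrix.mul_apply]
  rw [Finset.sum_eq_single (q.2, q.1)]
  · simp [swapM]
  · intro k _ hk
    have : ¬ (k.1 = q.2 ∧ k.2 = q.1) := by
      rintro ⟨h1, h2⟩; exact hk (Prod.ext h1 h2)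
    simp [swapM, this]
  · simp

lemma swap_conj {n : Type*} [Fintype n] [DecidableEq n] (A B : Matrix n n ℂ) :
    swapM n * (A ⊗ₖ B) * swapM n = B ⊗ₖ A := by
  rw [swap_mul, mul_swap]
  ext p q
  simp [Matrix.kroneckerMap_apply, mul_comm]

lemma swapH {n : Type*} [Fintype n] [DecidableEq n] : (swapM n)ᴴ = swapM n := by
  ext p q
  simp only [conjTranspose_apply, swapM]
  by_cases h : q.1 = p.2 ∧ q.2 = p.1
  · simp [h, h.1, h.2, And.comm]
  · have h' : ¬ (p.1 = q.2 ∧ p.2 = q.1) := by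
      rintro ⟨h1, h2⟩; exact h ⟨h2.symm, h1.symm⟩
    simp [h, h']

/-- if a unitary `G` on `H ⊗ H` commutes with the swap, `P = Σ_μ λ_μ ⊗ ρ_μ`,
`G P G* = Σ_μ λ̃_μ ⊗ ρ̃_μ` and `G* (ρ_μ ⊗ λ_ν) G = ρ̃_μ ⊗ λ̃_ν` for all `μ, ν`, then
(i) `λ_μ ⊗ ρ_ν = G (λ̃_μ ⊗ ρ̃_ν) G*` for all `μ, ν` and (ii) `G² P (G*)² = P`. -/
theorem statement5 {n : Type*} [Fintype n] [DecidableEq n] (r : ℕ)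
    (G : Matrix (n × n) (n × n) ℂ) (hG : G ∈ Matrix.unitaryGroup (n × n) ℂ)
    (hGS : G * swapM n = swapM n * G)
    (lam rho lamt rhot : Fin r → Matrix n n ℂ)
    (P : Matrix (n × n) (n × n) ℂ) (hP : P = ∑ μ, lam μ ⊗ₖ rho μ)
    (h1 : G * P * Gᴴ = ∑ μ, lamt μ ⊗ₖ rhot μ)
    (h2 : ∀ μ ν, Gᴴ * (rho μ ⊗ₖ lam ν) * G = rhot μ ⊗ₖ lamt ν) :
    (∀ μ ν, lam μ ⊗ₖ rho ν = G * (lamt μ ⊗ₖ rhot ν) * Gᴴ) ∧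
    G ^ 2 * P * Gᴴ ^ 2 = P := by
  have hGG : G * Gᴴ = 1 := by
    simpa [Matrix.star_eq_conjTranspose] using (Matrix.mem_unitaryGroup_iff.mp hG)
  have hGG' : Gᴴ * G = 1 := by
    simpa [Matrix.star_eq_conjTranspose] using (Matrix.mem_unitaryGroup_iff'.mp hG)
  -- Gᴴ commutes with S
  have hGSH : Gᴴ * swapM n = swapM n * Gᴴ := by
    have := congrArg Matrix.conjTranspose hGS
    simp only [Matrix.conjTranspose_mul, swapH] at this
    exact this.symm
  have key : ∀ μ ν, Gᴴ * (lam μ ⊗ₖ rho ν) * G = lamt μ ⊗ₖ rhot ν := by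
    intro μ ν
    have h := h2 ν μ
    have hc : swapM n * (Gᴴ * (rho ν ⊗ₖ lam μ) * G) * swapM n
        = swapM n * (rhot ν ⊗ₖ lamt μ) * swapM n := by rw [h]
    rw [swap_conj] at hc
    calc Gᴴ * (lam μ ⊗ₖ rho ν) * G
        = Gᴴ * (swapM n * (rho ν ⊗ₖ lam μ) * swapM n) * G := by rw [swap_conj]
      _ = (Gᴴ * swapM n) * (rho ν ⊗ₖ lam μ) * (swapM n * G) := by
          simp only [mul_assoc]
      _ = (swapM n * Gᴴ) * (rho ν ⊗ₖ lam μ) * (G * swapM n) := by rw [hGSH, hGS]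
      _ = swapM n * (Gᴴ * (rho ν ⊗ₖ lam μ) * G) * swapM n := by
          simp only [mul_assoc]
      _ = lamt μ ⊗ₖ rhot ν := hc
  have part1 : ∀ μ ν, lam μ ⊗ₖ rho ν = G * (lamt μ ⊗ₖ rhot ν) * Gᴴ := by
    intro μ ν
    rw [← key μ ν]
    have e : G * (Gᴴ * (lam μ ⊗ₖ rho ν) * G) * Gᴴ
        = (G * Gᴴ) * (lam μ ⊗ₖ rho ν) * (G * Gᴴ) := by simp only [mul_assoc]
    rw [e, hGG, one_mul, mul_one]
  refine ⟨part1, ?_⟩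
  have : G ^ 2 * P * Gᴴ ^ 2 = G * (G * P * Gᴴ) * Gᴴ := by
    rw [pow_two, pow_two]; simp only [mul_assoc]
  rw [this, h1, Finset.mul_sum, Finset.sum_mul]
  rw [hP]
  exact Finset.sum_congr rfl fun μ _ => (part1 μ μ).symm
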